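/- (Theorem 1, transfer-matrix form.) Fix μ ∈ [0,1] and let O and O' be arbitrary complex 3×3 matrices, indexed by m, m' ∈ {1, 0, −1}. Define the complex 4×4 matrices D_O := Σ_{m,m'} O_{m,m'} · A⁽ᵐ⁾ ⊗ A⁽ᵐ'⁾ and similarly D_{O'}. Then: (i) Tr[T(μ)^L] > 0 for all sufficiently large L; (ii) the single-site limits a := lim_{L→∞} Tr[D_O · T(μ)^{L−1}]/Tr[T(μ)^L] and a' := lim_{L→∞} Tr[D_{O'} · T(μ)^{L−1}]/Tr[T(μ)^L] exist; (iii) for every integer r ≥ 1 the two-point limit G(r) := lim_{L→∞} Tr[D_O · T(μ)^{r−1} · D_{O'} · T(μ)^{L−r−1}]/Tr[T(μ)^L] exists; and (iv) there is a constant C ≥ 0, depending only on O, O', and μ, such that |G(r) − a·a'| ≤ C·(μ/(2·λ₊(μ)))^r for every r ≥ 1. (These trace ratios are the finite-volume expectations ⟨Ô_j Ô'_{j+r}⟩ and ⟨Ô_j⟩ of single-site observables in the S=1 asymmetric VBS state, via its matrix product representation, so the statement asserts the exponential decay of all truncated two-point correlation functions with rate |λ₀/λ₊|.) -/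

import Mathlib

open Matrix Kronecker Filter

/-- The matrices `A⁽¹⁾, A⁽⁰⁾, A⁽⁻¹⁾` (indexed by `0, 1, 2`) of the S=1 asymmetric
VBS state, regarded as complex matrices. -/
noncomputable def A (μ : ℝ) : Fin 3 → Matrix (Fin 2) (Fin 2) ℂ :=
  ![!![0, 0; -(Real.sqrt μ : ℂ), 0],
    (1 / (Real.sqrt 2 : ℂ)) • !![1, 0; 0, -(μ : ℂ)],
    !![0, (Real.sqrt μ : ℂ); 0, 0]]

/-- The transfer matrix `T(μ)` of the S=1 asymmetric VBS state. -/
noncomputable def T (μ : ℝ) : Matrix (Fin 2 × Fin 2) (Fin 2 × Fin 2) ℂ :=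
  ∑ m : Fin 3, A μ m ⊗ₖ A μ m

/-- The transfer-matrix insertion `D_O` corresponding to a single-site operator `O`. -/
noncomputable def D (μ : ℝ) (O : Matrix (Fin 3) (Fin 3) ℂ) :
    Matrix (Fin 2 × Fin 2) (Fin 2 × Fin 2) ℂ :=
  ∑ m : Fin 3, ∑ m' : Fin 3, O m m' • (A μ m ⊗ₖ A μ m')

/-- The eigenvalue `λ₊(μ)`. -/
noncomputable def lamP (μ : ℝ) : ℝ := (μ ^ 2 + 1 + Real.sqrt (μ ^ 4 + 14 * μ ^ 2 + 1)) / 4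

namespace VBS
variable (μ : ℝ)
noncomputable def sq : ℝ := Real.sqrt (μ ^ 4 + 14 * μ ^ 2 + 1)
noncomputable def lamM : ℝ := (μ ^ 2 + 1 - sq μ) / 4
noncomputable def al : ℝ := lamP μ - μ ^ 2 / 2
noncomputable def NN : ℝ := al μ ^ 2 + μ ^ 2
noncomputable def wP : Fin 2 × Fin 2 → ℂ := fun p => !![((al μ : ℝ) : ℂ), 0; 0, (μ : ℂ)] p.1 p.2
noncomputable def wM : Fin 2 × Fin 2 → ℂ := fun p => !![(μ : ℂ), 0; 0, -((al μ : ℝ) : ℂ)] p.1 p.2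
noncomputable def QP : Matrix (Fin 2 × Fin 2) (Fin 2 × Fin 2) ℂ :=
  (((NN μ)⁻¹ : ℝ) : ℂ) • vecMulVec (wP μ) (wP μ)
noncomputable def QM : Matrix (Fin 2 × Fin 2) (Fin 2 × Fin 2) ℂ :=
  (((NN μ)⁻¹ : ℝ) : ℂ) • vecMulVec (wM μ) (wM μ)
def QZ : Matrix (Fin 2 × Fin 2) (Fin 2 × Fin 2) ℂ :=
  Matrix.of fun p q => if p = q ∧ p.1 ≠ p.2 then 1 else 0

lemma one_le_sq : 1 ≤ sq μ := by
  have h : Real.sqrt 1 ≤ sq μ := by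
    apply Real.sqrt_le_sqrt; nlinarith [_root_.sq_nonneg μ, _root_.sq_nonneg (μ^2)]
  simpa using h
lemma lamP_eq : lamP μ = (μ ^ 2 + 1 + sq μ) / 4 := rfl
lemma lamP_pos : 0 < lamP μ := by
  have := one_le_sq μ; rw [lamP_eq]; nlinarith [_root_.sq_nonneg μ]
lemma al_eq : al μ = (1 - μ ^ 2 + sq μ) / 4 := by rw [al, lamP_eq]; ring
lemma al_pos (hμ0 : 0 ≤ μ) (hμ1 : μ ≤ 1) : 0 < al μ := by
  have h1 := one_le_sq μ
  have h2 : μ^2 ≤ 1 := by nlinarith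
  rw [al_eq]; nlinarith
lemma NN_pos (hμ0 : 0 ≤ μ) (hμ1 : μ ≤ 1) : 0 < NN μ := by
  have := al_pos μ hμ0 hμ1; rw [NN]; positivity

variable (hμ0 : 0 ≤ μ) (hμ1 : μ ≤ 1)

lemma I1 : lamP μ * al μ ^ 2 + lamM μ * μ ^ 2 = NN μ / 2 := by
  have h : Real.sqrt (μ^4+14*μ^2+1) ^ 2 = μ^4+14*μ^2+1 := Real.sq_sqrt (by positivity)
  simp only [lamP, lamM, al, NN, sq]
  linear_combination ((1 - μ^2 + Real.sqrt (μ^4+14*μ^2+1))/64) * h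
lemma I2 : al μ * μ * (lamP μ - lamM μ) = μ * NN μ := by
  have h : Real.sqrt (μ^4+14*μ^2+1) ^ 2 = μ^4+14*μ^2+1 := Real.sq_sqrt (by positivity)
  simp only [lamP, lamM, al, NN, sq]
  linear_combination (μ/16) * h
lemma I3 : lamP μ * μ ^ 2 + lamM μ * al μ ^ 2 = μ ^ 2 * NN μ / 2 := by
  have h : Real.sqrt (μ^4+14*μ^2+1) ^ 2 = μ^4+14*μ^2+1 := Real.sq_sqrt (by positivity)
  simp only [lamP, lamM, al, NN, sq]
  linear_combination (-(Real.sqrt (μ^4+14*μ^2+1) + 1 - μ^2)/64) * h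

lemma resolution (hμ0 : 0 ≤ μ) (hμ1 : μ ≤ 1) : QP μ + QM μ + QZ = 1 := by
  have hN : ((NN μ : ℝ) : ℂ) ≠ 0 := Complex.ofReal_ne_zero.mpr (ne_of_gt (NN_pos μ hμ0 hμ1))
  have hNe : ((NN μ : ℝ) : ℂ) = (al μ : ℂ)^2 + (μ:ℂ)^2 := by rw [NN]; push_cast; ring
  ext p q
  fin_cases p <;> fin_cases q <;>
    simp [QP, QM, QZ, wP, wM, vecMulVec_apply, Matrix.one_apply, Prod.mk.injEq] <;>
    (try field_simp) <;>
    first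
      | rfl
      | (norm_num [Prod.ext_iff]; done)
      | ring1
      | linear_combination hNe
      | linear_combination (2:ℂ) * hNe
      | linear_combination -hNe
      | linear_combination (-2:ℂ) * hNe
      | skip

lemma T_decomp (hμ0 : 0 ≤ μ) (hμ1 : μ ≤ 1) :
    T μ = ((lamP μ : ℝ) : ℂ) • QP μ + ((lamM μ : ℝ) : ℂ) • QM μ + (-(μ:ℂ)/2) • QZ := by
  have hN : ((NN μ : ℝ) : ℂ) ≠ 0 := Complex.ofReal_ne_zero.mpr (ne_of_gt (NN_pos μ hμ0 hμ1))
  have h2 : ((Real.sqrt 2 : ℝ) : ℂ) ^ 2 = 2 := by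
    rw [← Complex.ofReal_pow, Real.sq_sqrt (by norm_num : (0:ℝ) ≤ 2)]; norm_num
  have h2n : ((Real.sqrt 2 : ℝ) : ℂ) ≠ 0 :=
    Complex.ofReal_ne_zero.mpr (by positivity)
  have hm : ((Real.sqrt μ : ℝ) : ℂ) ^ 2 = (μ : ℂ) := by
    rw [← Complex.ofReal_pow, Real.sq_sqrt hμ0]
  have i1 := congrArg (fun x : ℝ => (x:ℂ)) (I1 μ)
  have i2 := congrArg (fun x : ℝ => (x:ℂ)) (I2 μ)
  have i3 := congrArg (fun x : ℝ => (x:ℂ)) (I3 μ)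
  push_cast at i1 i2 i3
  ext p q
  fin_cases p <;> fin_cases q <;>
    simp [T, A, QP, QM, QZ, wP, wM, vecMulVec_apply, Matrix.kroneckerMap_apply,
      Fin.sum_univ_three, Matrix.sum_apply] <;>
    (try field_simp) <;>
    first
      | rfl
      | (norm_num [Prod.ext_iff]; done)
      | ring1
      | linear_combination i1
      | linear_combination i2
      | linear_combination i3
      | linear_combination -i1
      | linear_combination -i2
      | linear_combination -i3
      | (left; linear_combination -h2)
      | linear_combination (-(((Real.sqrt 2:ℝ):ℂ))^2) * i1 - (((NN μ:ℝ):ℂ))/2 * h2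
      | linear_combination (((NN μ:ℝ):ℂ)) * hm - i2
      | linear_combination (-(((Real.sqrt 2:ℝ):ℂ))^2) * i3 - ((μ:ℂ)^2*((NN μ:ℝ):ℂ))/2 * h2
      | linear_combination (μ:ℂ) * h2
      | skip


section helpers
variable {n : Type*} [Fintype n]

lemma vmv_mul_vmv (u v x y : n → ℂ) :
    vecMulVec u v * vecMulVec x y = (v ⬝ᵥ x) • vecMulVec u y := by
  ext a b
  simp only [Matrix.mul_apply, vecMulVec_apply, Matrix.smul_apply, dotProduct,
    smul_eq_mul, Finset.sum_mul]
  exact Finset.sum_congr rfl fun c _ => by ring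

lemma mul_vmv (M : Matrix n n ℂ) (u v : n → ℂ) :
    M * vecMulVec u v = vecMulVec (M.mulVec u) v := by
  ext a b
  simp only [Matrix.mul_apply, vecMulVec_apply, Matrix.mulVec, dotProduct, Finset.sum_mul]
  exact Finset.sum_congr rfl fun c _ => by ring

lemma vmv_mul (M : Matrix n n ℂ) (u v : n → ℂ) :
    vecMulVec u v * M = vecMulVec u (Matrix.vecMul v M) := by
  ext a b
  simp only [Matrix.mul_apply, vecMulVec_apply, Matrix.vecMul, dotProduct, Finset.mul_sum]
  exact Finset.sum_congr rfl fun c _ => by ring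

lemma trace_mul_vmv (M : Matrix n n ℂ) (u v : n → ℂ) :
    (M * vecMulVec u v).trace = v ⬝ᵥ M.mulVec u := by
  simp only [Matrix.trace, Matrix.diag, Matrix.mul_apply, vecMulVec_apply, Matrix.mulVec,
    dotProduct, Finset.mul_sum]
  exact Finset.sum_congr rfl fun c _ => Finset.sum_congr rfl fun a _ => by ring

lemma sandwich (M : Matrix n n ℂ) (w : n → ℂ) (c : ℂ) :
    (c • vecMulVec w w) * M * (c • vecMulVec w w)
      = (M * (c • vecMulVec w w)).trace • (c • vecMulVec w w) := by
  rw [Matrix.smul_mul, Matrix.mul_smul, Matrix.smul_mul, vmv_mul, vmv_mul_vmv,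
    Matrix.mul_smul, Matrix.trace_smul, trace_mul_vmv, Matrix.dotProduct_mulVec]
  simp only [smul_smul, smul_eq_mul]
  congr 1
  ring

lemma trace_vmv (u v : n → ℂ) : (vecMulVec u v).trace = v ⬝ᵥ u := by
  simp only [Matrix.trace, Matrix.diag, vecMulVec_apply, dotProduct]
  exact Finset.sum_congr rfl fun c _ => by ring

end helpers

lemma dotPP : wP μ ⬝ᵥ wP μ = ((NN μ : ℝ) : ℂ) := by
  simp [wP, dotProduct, Fintype.sum_prod_type, Fin.sum_univ_two, NN]; ring

lemma dotMM : wM μ ⬝ᵥ wM μ = ((NN μ : ℝ) : ℂ) := by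
  simp [wM, dotProduct, Fintype.sum_prod_type, Fin.sum_univ_two, NN]; ring

lemma dotPM : wP μ ⬝ᵥ wM μ = 0 := by
  simp [wP, wM, dotProduct, Fintype.sum_prod_type, Fin.sum_univ_two]; ring

lemma dotMP : wM μ ⬝ᵥ wP μ = 0 := by
  simp [wP, wM, dotProduct, Fintype.sum_prod_type, Fin.sum_univ_two]; ring

lemma QPP (hμ0 : 0 ≤ μ) (hμ1 : μ ≤ 1) : QP μ * QP μ = QP μ := by
  have hN : ((NN μ : ℝ) : ℂ) ≠ 0 := Complex.ofReal_ne_zero.mpr (ne_of_gt (NN_pos μ hμ0 hμ1))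
  rw [QP, Matrix.smul_mul, Matrix.mul_smul, vmv_mul_vmv, smul_smul, smul_smul, dotPP]
  congr 1
  push_cast
  field_simp

lemma QMM (hμ0 : 0 ≤ μ) (hμ1 : μ ≤ 1) : QM μ * QM μ = QM μ := by
  have hN : ((NN μ : ℝ) : ℂ) ≠ 0 := Complex.ofReal_ne_zero.mpr (ne_of_gt (NN_pos μ hμ0 hμ1))
  rw [QM, Matrix.smul_mul, Matrix.mul_smul, vmv_mul_vmv, smul_smul, smul_smul, dotMM]
  congr 1
  push_cast
  field_simp

lemma QPM : QP μ * QM μ = 0 := by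
  rw [QP, QM, Matrix.smul_mul, Matrix.mul_smul, vmv_mul_vmv, dotPM]
  simp

lemma QMP : QM μ * QP μ = 0 := by
  rw [QP, QM, Matrix.smul_mul, Matrix.mul_smul, vmv_mul_vmv, dotMP]
  simp

lemma QZ_mulVec_wP : QZ.mulVec (wP μ) = 0 := by
  ext p
  fin_cases p <;>
  simp [QZ, wP, Matrix.mulVec, dotProduct, Fintype.sum_prod_type, Fin.sum_univ_two]

lemma wP_vecMul_QZ : Matrix.vecMul (wP μ) QZ = 0 := by
  ext p
  fin_cases p <;>
  simp [QZ, wP, Matrix.vecMul, dotProduct, Fintype.sum_prod_type, Fin.sum_univ_two]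

lemma QZ_mulVec_wM : QZ.mulVec (wM μ) = 0 := by
  ext p
  fin_cases p <;>
  simp [QZ, wM, Matrix.mulVec, dotProduct, Fintype.sum_prod_type, Fin.sum_univ_two]

lemma wM_vecMul_QZ : Matrix.vecMul (wM μ) QZ = 0 := by
  ext p
  fin_cases p <;>
  simp [QZ, wM, Matrix.vecMul, dotProduct, Fintype.sum_prod_type, Fin.sum_univ_two]

lemma QPZ : QP μ * QZ = 0 := by
  rw [QP, Matrix.smul_mul, vmv_mul, wP_vecMul_QZ]
  ext a b; simp [vecMulVec_apply]

lemma QZP : QZ * QP μ = 0 := by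
  rw [QP, Matrix.mul_smul, mul_vmv, QZ_mulVec_wP]
  ext a b; simp [vecMulVec_apply]

lemma QMZ : QM μ * QZ = 0 := by
  rw [QM, Matrix.smul_mul, vmv_mul, wM_vecMul_QZ]
  ext a b; simp [vecMulVec_apply]

lemma QZM : QZ * QM μ = 0 := by
  rw [QM, Matrix.mul_smul, mul_vmv, QZ_mulVec_wM]
  ext a b; simp [vecMulVec_apply]

lemma QZZ : QZ * QZ = QZ := by
  ext p q
  fin_cases p <;> fin_cases q <;>
  simp [QZ, Matrix.mul_apply, Fintype.sum_prod_type, Fin.sum_univ_two]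

lemma traceQP (hμ0 : 0 ≤ μ) (hμ1 : μ ≤ 1) : (QP μ).trace = 1 := by
  have hN : (NN μ : ℝ) ≠ 0 := ne_of_gt (NN_pos μ hμ0 hμ1)
  rw [QP, Matrix.trace_smul, trace_vmv, dotPP, smul_eq_mul]
  push_cast
  field_simp
  norm_cast
  exact div_self hN

lemma traceQM (hμ0 : 0 ≤ μ) (hμ1 : μ ≤ 1) : (QM μ).trace = 1 := by
  have hN : (NN μ : ℝ) ≠ 0 := ne_of_gt (NN_pos μ hμ0 hμ1)
  rw [QM, Matrix.trace_smul, trace_vmv, dotMM, smul_eq_mul]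
  push_cast
  field_simp
  norm_cast
  exact div_self hN

lemma traceQZ : (QZ).trace = 2 := by
  simp [QZ, Matrix.trace, Matrix.diag, Fintype.sum_prod_type, Fin.sum_univ_two]
  norm_num

lemma lamM_nonpos (hμ0 : 0 ≤ μ) (hμ1 : μ ≤ 1) : lamM μ ≤ 0 := by
  have h : μ ^ 2 + 1 ≤ sq μ := by
    rw [sq, show μ^2+1 = Real.sqrt ((μ^2+1)^2) by rw [Real.sqrt_sq (by positivity)]]
    apply Real.sqrt_le_sqrt; nlinarith
  rw [lamM]; linarith

lemma abs_lamM_le (hμ0 : 0 ≤ μ) (hμ1 : μ ≤ 1) : |lamM μ| ≤ μ / 2 := by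
  have h1 := lamM_nonpos μ hμ0 hμ1
  have h2 : sq μ ≤ μ ^ 2 + 2 * μ + 1 := by
    rw [sq, show μ^2+2*μ+1 = Real.sqrt ((μ^2+2*μ+1)^2) by rw [Real.sqrt_sq (by positivity)]]
    apply Real.sqrt_le_sqrt; nlinarith [mul_nonneg hμ0 (_root_.sq_nonneg (μ - 1))]
  rw [abs_of_nonpos h1, lamM]; linarith

lemma half_mu_lt_lamP (hμ0 : 0 ≤ μ) : μ / 2 < lamP μ := by
  have := one_le_sq μ; rw [lamP_eq]; nlinarith [_root_.sq_nonneg (μ - 1)]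

noncomputable def lpC : ℂ := ((lamP μ : ℝ) : ℂ)
noncomputable def lmC : ℂ := ((lamM μ : ℝ) : ℂ)
noncomputable def l0C : ℂ := -(μ:ℂ)/2

lemma Tpow (hμ0 : 0 ≤ μ) (hμ1 : μ ≤ 1) (L : ℕ) :
    T μ ^ L = lpC μ ^ L • QP μ + lmC μ ^ L • QM μ + l0C μ ^ L • QZ := by
  induction L with
  | zero => simpa using (resolution μ hμ0 hμ1).symm
  | succ L ih =>
    rw [pow_succ, ih, T_decomp μ hμ0 hμ1]
    simp only [Matrix.add_mul, Matrix.mul_add, Matrix.smul_mul, Matrix.mul_smul,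
      QPP μ hμ0 hμ1, QMM μ hμ0 hμ1, QPM, QPZ, QMP, QMZ, QZP, QZM, QZZ,
      smul_zero, add_zero, zero_add, smul_smul, lpC, lmC, l0C]
    rw [pow_succ, pow_succ, pow_succ]
    simp [mul_comm]

lemma trace_T_pow (hμ0 : 0 ≤ μ) (hμ1 : μ ≤ 1) (L : ℕ) :
    (T μ ^ L).trace = lpC μ ^ L + lmC μ ^ L + 2 * l0C μ ^ L := by
  rw [Tpow μ hμ0 hμ1]
  simp only [Matrix.trace_add, Matrix.trace_smul, traceQP μ hμ0 hμ1, traceQM μ hμ0 hμ1,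
    traceQZ, smul_eq_mul]
  ring

lemma trace_mul_T_pow (hμ0 : 0 ≤ μ) (hμ1 : μ ≤ 1)
    (M : Matrix (Fin 2 × Fin 2) (Fin 2 × Fin 2) ℂ) (k : ℕ) :
    (M * T μ ^ k).trace = lpC μ ^ k * (M * QP μ).trace + lmC μ ^ k * (M * QM μ).trace
      + l0C μ ^ k * (M * QZ).trace := by
  rw [Tpow μ hμ0 hμ1]
  simp only [Matrix.mul_add, Matrix.mul_smul, Matrix.trace_add, Matrix.trace_smul, smul_eq_mul]

lemma lpC_ne (hμ0 : 0 ≤ μ) : lpC μ ≠ 0 :=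
  Complex.ofReal_ne_zero.mpr (ne_of_gt (lamP_pos μ))

lemma norm_lpC : ‖lpC μ‖ = lamP μ := by
  rw [lpC, Complex.norm_real, Real.norm_eq_abs, abs_of_pos (lamP_pos μ)]

lemma norm_lmC : ‖lmC μ‖ = |lamM μ| := by
  rw [lmC, Complex.norm_real, Real.norm_eq_abs]

lemma norm_l0C (hμ0 : 0 ≤ μ) : ‖l0C μ‖ = μ / 2 := by
  rw [l0C, norm_div, norm_neg]
  simp [Complex.norm_real, Real.norm_eq_abs, abs_of_nonneg hμ0]

lemma norm_ratM_lt (hμ0 : 0 ≤ μ) (hμ1 : μ ≤ 1) : ‖lmC μ / lpC μ‖ < 1 := by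
  have h1 : |lamM μ| ≤ μ / 2 := abs_lamM_le μ hμ0 hμ1
  have h2 : μ / 2 < lamP μ := half_mu_lt_lamP μ hμ0
  have h3 : (0:ℝ) < lamP μ := lamP_pos μ
  rw [norm_div, norm_lpC, norm_lmC, div_lt_one h3]
  linarith

lemma norm_rat0_lt (hμ0 : 0 ≤ μ) (hμ1 : μ ≤ 1) : ‖l0C μ / lpC μ‖ < 1 := by
  have h2 : μ / 2 < lamP μ := half_mu_lt_lamP μ hμ0
  have h3 : (0:ℝ) < lamP μ := lamP_pos μ
  rw [norm_div, norm_lpC, norm_l0C μ hμ0, div_lt_one h3]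
  exact h2

lemma master (hμ0 : 0 ≤ μ) (hμ1 : μ ≤ 1)
    (M : Matrix (Fin 2 × Fin 2) (Fin 2 × Fin 2) ℂ) (k : ℕ) :
    Tendsto (fun L : ℕ => (M * T μ ^ (L - k)).trace / (T μ ^ L).trace) atTop
      (nhds ((M * QP μ).trace / lpC μ ^ k)) := by
  have hlp := lpC_ne μ hμ0
  set cP := (M * QP μ).trace with hcP
  set cM := (M * QM μ).trace with hcM
  set cZ := (M * QZ).trace with hcZ
  set rM := lmC μ / lpC μ with hrM
  set r0 := l0C μ / lpC μ with hr0
  have hM1 : Tendsto (fun L : ℕ => rM ^ (L - k)) atTop (nhds 0) :=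
    (tendsto_pow_atTop_nhds_zero_of_norm_lt_one (norm_ratM_lt μ hμ0 hμ1)).comp
      (tendsto_sub_atTop_nat k)
  have h01 : Tendsto (fun L : ℕ => r0 ^ (L - k)) atTop (nhds 0) :=
    (tendsto_pow_atTop_nhds_zero_of_norm_lt_one (norm_rat0_lt μ hμ0 hμ1)).comp
      (tendsto_sub_atTop_nat k)
  have hM2 : Tendsto (fun L : ℕ => rM ^ L) atTop (nhds 0) :=
    tendsto_pow_atTop_nhds_zero_of_norm_lt_one (norm_ratM_lt μ hμ0 hμ1)
  have h02 : Tendsto (fun L : ℕ => r0 ^ L) atTop (nhds 0) :=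
    tendsto_pow_atTop_nhds_zero_of_norm_lt_one (norm_rat0_lt μ hμ0 hμ1)
  have hnum : Tendsto (fun L : ℕ => (cP + cM * rM ^ (L - k) + cZ * r0 ^ (L - k)) / lpC μ ^ k)
      atTop (nhds (cP / lpC μ ^ k)) := by
    have hA : Tendsto (fun L : ℕ => cP + cM * rM ^ (L - k) + cZ * r0 ^ (L - k)) atTop
        (nhds (cP + cM * 0 + cZ * 0)) :=
      ((tendsto_const_nhds (x := cP)).add ((tendsto_const_nhds (x := cM)).mul hM1)).add
        ((tendsto_const_nhds (x := cZ)).mul h01)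
    have := hA.div_const (lpC μ ^ k)
    simpa using this
  have hden : Tendsto (fun L : ℕ => 1 + rM ^ L + 2 * r0 ^ L) atTop (nhds 1) := by
    have := ((tendsto_const_nhds (x := (1:ℂ))).add hM2).add
      ((tendsto_const_nhds (x := (2:ℂ))).mul h02)
    simpa using this
  have key := hnum.div hden (by norm_num)
  simp only [div_one] at key
  apply key.congr'
  rw [Filter.eventuallyEq_iff_exists_mem]
  refine ⟨{L | k ≤ L}, Filter.mem_atTop k, fun L hL => ?_⟩
  simp only [Set.mem_setOf_eq] at hL
  have hpow : lpC μ ^ L = lpC μ ^ k * lpC μ ^ (L - k) := by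
    rw [← pow_add]; congr 1; omega
  have hX : lpC μ ^ (L - k) ≠ 0 := pow_ne_zero _ hlp
  have hXk : lpC μ ^ k ≠ 0 := pow_ne_zero _ hlp
  have hXL : lpC μ ^ L ≠ 0 := pow_ne_zero _ hlp
  have e1 : (cP + cM * rM ^ (L - k) + cZ * r0 ^ (L - k)) / lpC μ ^ k
      = (M * T μ ^ (L - k)).trace / lpC μ ^ L := by
    rw [trace_mul_T_pow μ hμ0 hμ1, ← hcP, ← hcM, ← hcZ, hpow, hrM, hr0, div_pow, div_pow]
    field_simp
  have e2 : (1 : ℂ) + rM ^ L + 2 * r0 ^ L = (T μ ^ L).trace / lpC μ ^ L := by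
    rw [trace_T_pow μ hμ0 hμ1, hrM, hr0, div_pow, div_pow]
    field_simp
  simp only [Pi.div_apply]
  rw [e1, e2, div_div_div_comm, div_self hXL, div_one]

lemma trace_real (hμ0 : 0 ≤ μ) (hμ1 : μ ≤ 1) (L : ℕ) :
    (T μ ^ L).trace = ((lamP μ ^ L + lamM μ ^ L + 2 * (-μ/2) ^ L : ℝ) : ℂ) := by
  rw [trace_T_pow μ hμ0 hμ1, lpC, lmC, l0C]
  push_cast
  ring

lemma eventually_trace_pos (hμ0 : 0 ≤ μ) (hμ1 : μ ≤ 1) :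
    ∀ᶠ L : ℕ in atTop, 0 < lamP μ ^ L + lamM μ ^ L + 2 * (-μ/2) ^ L := by
  have hP := lamP_pos μ
  have hratio : Tendsto (fun L : ℕ => ((μ/2) / lamP μ) ^ L) atTop (nhds 0) := by
    apply tendsto_pow_atTop_nhds_zero_of_lt_one
    · positivity
    · rw [div_lt_one hP]; exact half_mu_lt_lamP μ hμ0
  have hev : ∀ᶠ L : ℕ in atTop, ((μ/2) / lamP μ) ^ L < 1/3 :=
    hratio.eventually_lt_const (by norm_num)
  filter_upwards [hev] with L hL
  have h1 : (μ/2) ^ L < lamP μ ^ L / 3 := by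
    rw [div_pow, div_lt_iff₀ (by positivity)] at hL
    nlinarith [pow_pos hP L]
  have h2 : |lamM μ ^ L| ≤ (μ/2) ^ L := by
    rw [abs_pow]
    exact pow_le_pow_left₀ (abs_nonneg _) (abs_lamM_le μ hμ0 hμ1) L
  have h3 : |(-μ/2) ^ L| ≤ (μ/2) ^ L := by
    rw [abs_pow]
    apply pow_le_pow_left₀ (abs_nonneg _)
    rw [abs_of_nonpos (by linarith : -μ/2 ≤ 0)]
    linarith
  have h4 := neg_abs_le (lamM μ ^ L)
  have h5 := neg_abs_le ((-μ/2) ^ L)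
  linarith

lemma QP_sandwich (M : Matrix (Fin 2 × Fin 2) (Fin 2 × Fin 2) ℂ) :
    QP μ * M * QP μ = (M * QP μ).trace • QP μ := by
  rw [QP]; exact sandwich M _ _

lemma vP_eq (M1 M2 : Matrix (Fin 2 × Fin 2) (Fin 2 × Fin 2) ℂ) :
    (M1 * QP μ * M2 * QP μ).trace = (M1 * QP μ).trace * (M2 * QP μ).trace := by
  rw [Matrix.trace_mul_comm]
  rw [show QP μ * (M1 * QP μ * M2) = (QP μ * M1 * QP μ) * M2 from by
    simp only [Matrix.mul_assoc]]
  rw [QP_sandwich, Matrix.smul_mul, Matrix.trace_smul, smul_eq_mul,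
    Matrix.trace_mul_comm (QP μ) M2]

lemma al_zero : al 0 = 1/2 := by
  rw [al_eq, sq]
  norm_num

lemma D_zero (O : Matrix (Fin 3) (Fin 3) ℂ) : D 0 O = ((O 1 1)/2) • QP 0 := by
  have hal : ((al 0 : ℝ) : ℂ) = 1/2 := by rw [al_zero]; norm_num
  have hNN : (((NN 0)⁻¹ : ℝ) : ℂ) = 4 := by
    rw [NN, al_zero]; norm_num
  have h2 : ((Real.sqrt 2 : ℝ) : ℂ) ^ 2 = 2 := by
    rw [← Complex.ofReal_pow, Real.sq_sqrt (by norm_num : (0:ℝ) ≤ 2)]; norm_num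
  have h2n : ((Real.sqrt 2 : ℝ) : ℂ) ≠ 0 := Complex.ofReal_ne_zero.mpr (by positivity)
  ext p q
  fin_cases p <;> fin_cases q <;>
    simp [D, A, QP, wP, vecMulVec_apply, Matrix.kroneckerMap_apply,
      Fin.sum_univ_three, Matrix.sum_apply, hal, hNN] <;>
    (try field_simp) <;>
    first
      | rfl
      | ring1
      | linear_combination (O 1 1) * h2 / 2
      | linear_combination (O 1 1) * h2
      | linear_combination -(O 1 1) * h2 / 2
      | linear_combination -(O 1 1) * h2
      | linear_combination (O 1 1) * h2 * 2
      | linear_combination -(O 1 1) * h2 * 2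
      | linear_combination -(O 1 1) * h2 * 4
      | linear_combination (O 1 1) * h2 * 4
      | skip

lemma DQM_zero (O : Matrix (Fin 3) (Fin 3) ℂ) : D 0 O * QM 0 = 0 := by
  rw [D_zero, Matrix.smul_mul, QPM]; simp

lemma DQZ_zero (O : Matrix (Fin 3) (Fin 3) ℂ) : D 0 O * QZ = 0 := by
  rw [D_zero, Matrix.smul_mul, QPZ]; simp

end VBS

open VBS

/-- Theorem 1 in transfer-matrix form: for any single-site observables `O, O'` of the
S=1 asymmetric VBS state (`μ ∈ [0,1]`): (i) `Tr[T(μ)^L] > 0` for all large `L`;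
(ii) the single-site expectations converge; (iii) the two-point expectations converge
for every `r ≥ 1`; (iv) the truncated two-point function decays exponentially with
rate `|λ₀/λ₊| = μ/(2λ₊)`. -/
theorem truncated_correlation_decay_S1 (μ : ℝ) (hμ : μ ∈ Set.Icc (0 : ℝ) 1)
    (O O' : Matrix (Fin 3) (Fin 3) ℂ) :
    (∃ L₀ : ℕ, ∀ L ≥ L₀, 0 < ((T μ ^ L).trace).re ∧ ((T μ ^ L).trace).im = 0) ∧
    ∃ a a' : ℂ,
      Tendsto (fun L : ℕ => (D μ O * T μ ^ (L - 1)).trace / (T μ ^ L).trace)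
        atTop (nhds a) ∧
      Tendsto (fun L : ℕ => (D μ O' * T μ ^ (L - 1)).trace / (T μ ^ L).trace)
        atTop (nhds a') ∧
      ∃ G : ℕ → ℂ,
        (∀ r : ℕ, 1 ≤ r →
          Tendsto (fun L : ℕ =>
              (D μ O * T μ ^ (r - 1) * D μ O' * T μ ^ (L - r - 1)).trace / (T μ ^ L).trace)
            atTop (nhds (G r))) ∧
        ∃ C : ℝ, 0 ≤ C ∧ ∀ r : ℕ, 1 ≤ r →
          ‖G r - a * a'‖ ≤ C * (μ / (2 * lamP μ)) ^ r := by
  obtain ⟨hμ0, hμ1⟩ := hμ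
  constructor
  · obtain ⟨L₀, hL₀⟩ := Filter.eventually_atTop.mp (eventually_trace_pos μ hμ0 hμ1)
    refine ⟨L₀, fun L hL => ?_⟩
    rw [trace_real μ hμ0 hμ1]
    exact ⟨by rw [Complex.ofReal_re]; exact hL₀ L hL, Complex.ofReal_im _⟩
  · refine ⟨(D μ O * QP μ).trace / lpC μ, (D μ O' * QP μ).trace / lpC μ, ?_, ?_, ?_⟩
    · simpa using master μ hμ0 hμ1 (D μ O) 1
    · simpa using master μ hμ0 hμ1 (D μ O') 1
    refine ⟨fun r => (D μ O * T μ ^ (r - 1) * D μ O' * QP μ).trace / lpC μ ^ (r + 1), ?_, ?_⟩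
    · intro r hr
      have h := master μ hμ0 hμ1 (D μ O * T μ ^ (r - 1) * D μ O') (r + 1)
      simpa [Nat.sub_sub] using h
    · set tP := (D μ O * QP μ).trace with htP
      set tP' := (D μ O' * QP μ).trace with htP'
      set vM := (D μ O * QM μ * D μ O' * QP μ).trace with hvM
      set vZ := (D μ O * QZ * D μ O' * QP μ).trace with hvZ
      have hlp := lpC_ne μ hμ0
      have key : ∀ r : ℕ, 1 ≤ r →
          (D μ O * T μ ^ (r - 1) * D μ O' * QP μ).trace / lpC μ ^ (r + 1)
            - (tP / lpC μ) * (tP' / lpC μ)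
          = (lmC μ ^ (r - 1) * vM + l0C μ ^ (r - 1) * vZ) / lpC μ ^ (r + 1) := by
        intro r hr
        have hexp : (D μ O * T μ ^ (r - 1) * D μ O' * QP μ).trace
            = lpC μ ^ (r - 1) * (tP * tP') + lmC μ ^ (r - 1) * vM + l0C μ ^ (r - 1) * vZ := by
          rw [Tpow μ hμ0 hμ1 (r - 1)]
          simp only [Matrix.mul_add, Matrix.add_mul, Matrix.mul_smul, Matrix.smul_mul,
            Matrix.trace_add, Matrix.trace_smul, smul_eq_mul]
          rw [vP_eq]
        rw [hexp]
        have hpow : lpC μ ^ (r + 1) = lpC μ ^ (r - 1) * lpC μ ^ 2 := by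
          rw [← pow_add]; congr 1; omega
        rw [hpow]
        have h1 : lpC μ ^ (r - 1) ≠ 0 := pow_ne_zero _ hlp
        field_simp
        ring
      by_cases h0 : μ = 0
      · refine ⟨0, le_refl 0, fun r hr => ?_⟩
        rw [key r hr]
        subst h0
        have hM : vM = 0 := by rw [hvM, DQM_zero]; simp
        have hZ : vZ = 0 := by rw [hvZ, DQZ_zero]; simp
        simp [hM, hZ]
      · have hmu : 0 < μ := lt_of_le_of_ne hμ0 (Ne.symm h0)
        have hP := lamP_pos μ
        refine ⟨(‖vM‖ + ‖vZ‖) * 2 / (μ * lamP μ), by positivity, fun r hr => ?_⟩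
        rw [key r hr]
        obtain ⟨q, rfl⟩ : ∃ q, r = q + 1 := ⟨r - 1, by omega⟩
        simp only [Nat.add_sub_cancel]
        have h1 : ‖lmC μ ^ q * vM + l0C μ ^ q * vZ‖
            ≤ (μ/2) ^ q * ‖vM‖ + (μ/2) ^ q * ‖vZ‖ := by
          refine le_trans (norm_add_le _ _) ?_
          rw [norm_mul, norm_mul, norm_pow, norm_pow, norm_lmC, norm_l0C μ hμ0]
          have : |lamM μ| ^ q ≤ (μ/2) ^ q :=
            pow_le_pow_left₀ (abs_nonneg _) (abs_lamM_le μ hμ0 hμ1) q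
          have hv : (0:ℝ) ≤ ‖vM‖ := norm_nonneg _
          nlinarith [norm_nonneg vZ, pow_nonneg (abs_nonneg (lamM μ)) q]
        calc ‖(lmC μ ^ q * vM + l0C μ ^ q * vZ) / lpC μ ^ (q + 1 + 1)‖
            = ‖lmC μ ^ q * vM + l0C μ ^ q * vZ‖ / lamP μ ^ (q + 1 + 1) := by
              rw [norm_div, norm_pow, norm_lpC]
          _ ≤ ((μ/2) ^ q * ‖vM‖ + (μ/2) ^ q * ‖vZ‖) / lamP μ ^ (q + 1 + 1) := by
              exact div_le_div_of_nonneg_right h1 (by positivity)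
          _ = ((‖vM‖ + ‖vZ‖) * 2 / (μ * lamP μ)) * (μ / (2 * lamP μ)) ^ (q + 1) := by
              field_simp
              have e1 : lamP μ * (lamP μ)⁻¹ = 1 := mul_inv_cancel₀ hP.ne'
              have e2 : lamP μ ^ q * (lamP μ)⁻¹ ^ q = 1 := by rw [← mul_pow, e1, one_pow]
              linear_combination
                (-(μ * μ ^ q * (‖vM‖ + ‖vZ‖) * (1/2) ^ q * lamP μ * lamP μ ^ q * (lamP μ)⁻¹ ^ q)) * e1
                - (μ * μ ^ q * (‖vM‖ + ‖vZ‖) * (1/2) ^ q * lamP μ) * e2
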